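/- Let n, d, k be positive integers with d·k³ ≤ n, let 0 < p < 1, and fix any d-dependent random graph distribution G(n,p,d). If S is a uniformly random k-element subset of the vertex set {1,…,n}, then the probability that S is uncorrelated is at least 1 − 3dk³/(2n). -/

import Mathlib

/-- A `d`-dependent random graph distribution `G(n, p, d)`: a probability space with
Boolean random variables `X e`, one for each unordered pair `e` of distinct vertices of
`Fin n`, each equal to `true` with probability `p`, such that each `X e` is independent of
the joint family of all variables at pairs outside a set `N e` of at most `d` other pairs. -/
structure DepGraph (n : ℕ) (p : ℝ) (d : ℕ) where
  Ω : Type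
  [mΩ : MeasurableSpace Ω]
  μ : MeasureTheory.Measure Ω
  [probμ : MeasureTheory.IsProbabilityMeasure μ]
  X : Sym2 (Fin n) → Ω → Bool
  meas : ∀ e, Measurable (X e)
  edgeProb : ∀ e : Sym2 (Fin n), ¬ e.IsDiag → μ {ω | X e ω = true} = ENNReal.ofReal p
  locDep : ∀ e : Sym2 (Fin n), ¬ e.IsDiag →
    ∃ N : Finset (Sym2 (Fin n)), e ∉ N ∧ N.card ≤ d ∧
      ProbabilityTheory.IndepFun (X e)
        (fun ω (f : {f : Sym2 (Fin n) // ¬ f.IsDiag ∧ f ∉ N ∧ f ≠ e}) => X f.1 ω) μ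

attribute [instance] DepGraph.mΩ DepGraph.probμ

open MeasureTheory ProbabilityTheory

/-- The random simple graph sampled from a `d`-dependent random graph distribution:
`i` and `j` are adjacent iff `i ≠ j` and `X {i,j} = true`. -/
def DepGraph.graph {n : ℕ} {p : ℝ} {d : ℕ} (G : DepGraph n p d) (ω : G.Ω) :
    SimpleGraph (Fin n) where
  Adj i j := i ≠ j ∧ G.X s(i, j) ω = true
  symm := ⟨by
    intro i j h
    refine ⟨h.1.symm, ?_⟩
    rw [Sym2.eq_swap]
    exact h.2⟩
  loopless := ⟨fun i h => h.1 rfl⟩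

/-- A set `s` of vertices is uncorrelated if the edge variables at any two distinct pairs
of vertices of `s` are independent. -/
def DepGraph.Uncorrelated {n : ℕ} {p : ℝ} {d : ℕ} (G : DepGraph n p d)
    (s : Finset (Fin n)) : Prop :=
  ∀ e e' : Sym2 (Fin n), ¬ e.IsDiag → ¬ e'.IsDiag → e ≠ e' →
    (∀ v ∈ e, v ∈ s) → (∀ v ∈ e', v ∈ s) →
    IndepFun (G.X e) (G.X e') G.μ

lemma sym2_eq_of_card_le_two {α : Type*} [DecidableEq α] {e e' : Sym2 α} {t : Finset α}
    (ht : t.card ≤ 2) (he : ¬e.IsDiag) (he' : ¬e'.IsDiag)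
    (hes : ∀ v ∈ e, v ∈ t) (hes' : ∀ v ∈ e', v ∈ t) : e = e' := by
  induction e using Sym2.ind with | _ a b =>
  induction e' using Sym2.ind with | _ c d =>
  rw [Sym2.mk_isDiag_iff] at he he'
  have hat : a ∈ t := hes a (by simp)
  have hbt : b ∈ t := hes b (by simp)
  have hct : c ∈ t := hes' c (by simp)
  have hdt : d ∈ t := hes' d (by simp)
  have hsub : ({a, b} : Finset α) ⊆ t := by
    intro x hx; rcases Finset.mem_insert.1 hx with rfl | hx
    · exact hat
    · rw [Finset.mem_singleton] at hx; subst hx; exact hbt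
  have hteq : ({a, b} : Finset α) = t :=
    Finset.eq_of_subset_of_card_le hsub (by rw [Finset.card_pair he]; exact ht)
  have hc : c = a ∨ c = b := by rw [← hteq] at hct; simpa using hct
  have hd : d = a ∨ d = b := by rw [← hteq] at hdt; simpa using hdt
  rw [Sym2.eq_iff]
  rcases hc with rfl | rfl <;> rcases hd with rfl | rfl <;> tauto

def sym2verts {n : ℕ} (e : Sym2 (Fin n)) : Finset (Fin n) := Finset.univ.filter (· ∈ e)

lemma mem_sym2verts {n : ℕ} {e : Sym2 (Fin n)} {v : Fin n} : v ∈ sym2verts e ↔ v ∈ e := by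
  simp [sym2verts]

lemma three_le_card_union {n : ℕ} {e e' : Sym2 (Fin n)} (he : ¬e.IsDiag) (he' : ¬e'.IsDiag)
    (hne : e ≠ e') : 3 ≤ (sym2verts e ∪ sym2verts e').card := by
  by_contra h
  push_neg at h
  exact hne (sym2_eq_of_card_le_two (by omega) he he'
    (fun v hv => Finset.mem_union_left _ (mem_sym2verts.2 hv))
    (fun v hv => Finset.mem_union_right _ (mem_sym2verts.2 hv)))

lemma card_supersets {n k : ℕ} (T : Finset (Fin n)) (hT : T.card = 3) :
    ((Finset.univ.powersetCard k).filter (fun s => T ⊆ s)).card ≤ (n - 3).choose (k - 3) := by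
  refine (Finset.card_le_card_of_injOn (fun s => s \ T)
    (t := (Finset.univ \ T).powersetCard (k - 3)) ?_ ?_).trans ?_
  rotate_right
  ·
    rw [Finset.card_powersetCard, Finset.card_sdiff_of_subset (Finset.subset_univ T), hT,
      Finset.card_univ, Fintype.card_fin]
  · intro s hs
    rw [Finset.mem_coe, Finset.mem_filter, Finset.mem_powersetCard_univ] at hs
    rw [Finset.mem_coe, Finset.mem_powersetCard]
    exact ⟨Finset.sdiff_subset_sdiff (Finset.subset_univ _) le_rfl,
      by rw [Finset.card_sdiff_of_subset hs.2, hs.1, hT]⟩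
  · intro s1 h1 s2 h2 heq
    rw [Finset.mem_coe, Finset.mem_filter] at h1 h2
    have e1 : s1 = s1 \ T ∪ T := (Finset.sdiff_union_of_subset h1.2).symm
    have e2 : s2 = s2 \ T ∪ T := (Finset.sdiff_union_of_subset h2.2).symm
    rw [e1, e2]; exact congrArg (· ∪ T) heq

lemma choose_id3 (a b : ℕ) :
    (a + 3) * ((a + 2) * ((a + 1) * Nat.choose a b)) =
      (b + 3) * ((b + 2) * ((b + 1) * Nat.choose (a + 3) (b + 3))) := by
  have h1 := Nat.add_one_mul_choose_eq a b
  have h2 := Nat.add_one_mul_choose_eq (a + 1) (b + 1)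
  have h3 := Nat.add_one_mul_choose_eq (a + 2) (b + 2)
  simp only [add_assoc, Nat.reduceAdd] at h1 h2 h3
  calc (a + 3) * ((a + 2) * ((a + 1) * Nat.choose a b))
      = (a + 3) * ((a + 2) * (Nat.choose (a + 1) (b + 1) * (b + 1))) := by rw [h1]
    _ = (b + 1) * ((a + 3) * ((a + 2) * Nat.choose (a + 1) (b + 1))) := by ring
    _ = (b + 1) * ((a + 3) * (Nat.choose (a + 2) (b + 2) * (b + 2))) := by rw [h2]
    _ = (b + 1) * ((b + 2) * ((a + 3) * Nat.choose (a + 2) (b + 2))) := by ring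
    _ = (b + 1) * ((b + 2) * (Nat.choose (a + 3) (b + 3) * (b + 3))) := by rw [h3]
    _ = (b + 3) * ((b + 2) * ((b + 1) * Nat.choose (a + 3) (b + 3))) := by ring

lemma nat_key (a b d E B : ℕ) (ha : 1 ≤ a) (hE : 2 * E ≤ (a + 3) * (a + 3))
    (hB : B ≤ E * d * Nat.choose a b) :
    2 * (a + 3) * B ≤ 3 * d * (b + 3) ^ 3 * Nat.choose (a + 3) (b + 3) := by
  refine Nat.le_of_mul_le_mul_right ?_ (show 0 < (a + 2) * (a + 1) by positivity)
  have hid := choose_id3 a b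
  have hq1 : (b + 2) * (b + 1) ≤ (b + 3) ^ 2 := by nlinarith
  have hq2 : (a + 3) ^ 2 ≤ 3 * ((a + 2) * (a + 1)) := by nlinarith
  have hmain : (a + 3) ^ 2 * ((b + 2) * (b + 1)) ≤ 3 * (b + 3) ^ 2 * ((a + 2) * (a + 1)) := by
    calc (a + 3) ^ 2 * ((b + 2) * (b + 1)) ≤ (a + 3) ^ 2 * (b + 3) ^ 2 :=
          Nat.mul_le_mul le_rfl hq1
      _ ≤ (3 * ((a + 2) * (a + 1))) * (b + 3) ^ 2 := Nat.mul_le_mul hq2 le_rfl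
      _ = 3 * (b + 3) ^ 2 * ((a + 2) * (a + 1)) := by ring
  calc 2 * (a + 3) * B * ((a + 2) * (a + 1))
      ≤ 2 * (a + 3) * (E * d * Nat.choose a b) * ((a + 2) * (a + 1)) := by
        exact Nat.mul_le_mul (Nat.mul_le_mul le_rfl hB) le_rfl
    _ = (2 * E) * (d * ((a + 3) * ((a + 2) * ((a + 1) * Nat.choose a b)))) := by ring
    _ = (2 * E) * (d * ((b + 3) * ((b + 2) * ((b + 1) * Nat.choose (a + 3) (b + 3))))) := by
        rw [hid]
    _ ≤ ((a + 3) * (a + 3)) * (d * ((b + 3) * ((b + 2) * ((b + 1) *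
          Nat.choose (a + 3) (b + 3))))) := Nat.mul_le_mul hE le_rfl
    _ = ((a + 3) ^ 2 * ((b + 2) * (b + 1))) * (d * (b + 3) * Nat.choose (a + 3) (b + 3)) := by
        ring
    _ ≤ (3 * (b + 3) ^ 2 * ((a + 2) * (a + 1))) * (d * (b + 3) * Nat.choose (a + 3) (b + 3)) :=
        Nat.mul_le_mul hmain le_rfl
    _ = 3 * d * (b + 3) ^ 3 * Nat.choose (a + 3) (b + 3) * ((a + 2) * (a + 1)) := by ring

/-- **Lemma (most `k`-sets are uncorrelated).** Let `n, d, k` be positive integers with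
`d·k³ ≤ n`, let `0 < p < 1`, and fix any `d`-dependent random graph distribution
`G(n,p,d)`.  If `S` is a uniformly random `k`-element subset of the vertex set, then the
probability that `S` is uncorrelated is at least `1 - 3dk³/(2n)`; equivalently (as stated
here), the number of uncorrelated `k`-element vertex sets is at least
`(1 - 3dk³/(2n))·C(n,k)`. -/
theorem uncorrelated_sets_lower_bound :
    ∀ n d k : ℕ, 0 < n → 0 < d → 0 < k → d * k ^ 3 ≤ n →
      ∀ p : ℝ, 0 < p → p < 1 →
      ∀ G : DepGraph n p d,
        (1 - 3 * (d : ℝ) * (k : ℝ) ^ 3 / (2 * (n : ℝ))) * (n.choose k : ℝ) ≤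
          (({s : Finset (Fin n) | s.card = k ∧ G.Uncorrelated s}).ncard : ℝ) := by
  intro n d k hn hd hk hdk p hp hp1 G
  classical
  have H : ∀ e : Sym2 (Fin n), ∃ N : Finset (Sym2 (Fin n)), ¬e.IsDiag →
      (N.card ≤ d ∧ ∀ e' : Sym2 (Fin n), ¬e'.IsDiag → e' ∉ N → e' ≠ e →
        IndepFun (G.X e) (G.X e') G.μ) := by
    intro e
    by_cases he : e.IsDiag
    · exact ⟨∅, fun h => absurd he h⟩
    · obtain ⟨N, _, hcard, hind⟩ := G.locDep e he
      refine ⟨N, fun _ => ⟨hcard, fun e' he' hm hne => ?_⟩⟩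
      exact hind.comp measurable_id (measurable_pi_apply ⟨e', he', hm, hne⟩)
  choose Ns hNs using H
  set Good := (Finset.univ.powersetCard k).filter (fun s => G.Uncorrelated s) with hGood
  set Bad := (Finset.univ.powersetCard k).filter (fun s => ¬ G.Uncorrelated s) with hBadd
  have hset : {s : Finset (Fin n) | s.card = k ∧ G.Uncorrelated s} = ↑Good := by
    ext s
    simp [hGood, Finset.mem_powersetCard_univ]
  rw [hset, Set.ncard_coe_finset]
  have hsum : Good.card + Bad.card = n.choose k := by
    rw [hGood, hBadd, Finset.card_filter_add_card_filter_not,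
      Finset.card_powersetCard, Finset.card_univ, Fintype.card_fin]
  rcases le_or_gt k 2 with hk2 | hk3
  · have hBade : Bad = ∅ := by
      rw [hBadd, Finset.filter_eq_empty_iff]
      intro s hs
      rw [Finset.mem_powersetCard_univ] at hs
      rw [not_not]
      intro e e' he he' hne hv hv'
      exact absurd (sym2_eq_of_card_le_two (by omega) he he' hv hv') hne
    have hGc : Good.card = n.choose k := by
      rw [← hsum, hBade]; simp
    rw [hGc]
    have hc0 : (0:ℝ) ≤ 3 * (d : ℝ) * (k : ℝ) ^ 3 / (2 * (n : ℝ)) := by positivity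
    nlinarith [Nat.cast_nonneg (α := ℝ) (n.choose k)]
  · -- counting bad sets
    set D := Finset.univ.filter (fun q : Sym2 (Fin n) × Sym2 (Fin n) =>
      ¬q.1.IsDiag ∧ ¬q.2.IsDiag ∧ q.1 ≠ q.2 ∧ ¬ IndepFun (G.X q.1) (G.X q.2) G.μ) with hDd
    have HT : ∀ q : Sym2 (Fin n) × Sym2 (Fin n), ∃ T : Finset (Fin n),
        q ∈ D → T.card = 3 ∧ T ⊆ sym2verts q.1 ∪ sym2verts q.2 := by
      intro q
      by_cases hq : q ∈ D
      · rw [hDd, Finset.mem_filter] at hq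
        obtain ⟨-, h1, h2, h3, -⟩ := hq
        obtain ⟨T, hTsub, hTcard⟩ :=
          Finset.exists_subset_card_eq (three_le_card_union h1 h2 h3)
        exact ⟨T, fun _ => ⟨hTcard, hTsub⟩⟩
      · exact ⟨∅, fun h => absurd h hq⟩
    choose tri htri using HT
    have hBadsub : Bad ⊆ D.biUnion
        (fun q => (Finset.univ.powersetCard k).filter (fun s => tri q ⊆ s)) := by
      intro s hs
      rw [hBadd, Finset.mem_filter, Finset.mem_powersetCard_univ] at hs
      obtain ⟨hsk, hnc⟩ := hs
      unfold DepGraph.Uncorrelated at hnc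
      push_neg at hnc
      obtain ⟨e, e', he, he', hne, hv, hv', hni⟩ := hnc
      have hqD : (e, e') ∈ D := by
        rw [hDd, Finset.mem_filter]
        exact ⟨Finset.mem_univ _, he, he', hne, hni⟩
      refine Finset.mem_biUnion.2 ⟨(e, e'), hqD, ?_⟩
      rw [Finset.mem_filter, Finset.mem_powersetCard_univ]
      refine ⟨hsk, (htri _ hqD).2.trans ?_⟩
      intro v hv2
      rcases Finset.mem_union.1 hv2 with h | h
      · exact hv v (mem_sym2verts.1 h)
      · exact hv' v (mem_sym2verts.1 h)
    have hBadcard : Bad.card ≤ D.card * ((n - 3).choose (k - 3)) := by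
      refine (Finset.card_le_card hBadsub).trans (Finset.card_biUnion_le.trans ?_)
      refine (Finset.sum_le_sum (fun q hq => card_supersets (tri q) (htri q hq).1)).trans ?_
      rw [Finset.sum_const, smul_eq_mul]
    have hDsub : D ⊆ (Finset.univ.filter (fun e : Sym2 (Fin n) => ¬e.IsDiag)).biUnion
        (fun e => {e} ×ˢ Ns e) := by
      intro q hq
      rw [hDd, Finset.mem_filter] at hq
      obtain ⟨-, h1, h2, h3, h4⟩ := hq
      refine Finset.mem_biUnion.2 ⟨q.1, by simp [h1], ?_⟩
      have hmem : q.2 ∈ Ns q.1 := by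
        by_contra hmem
        exact h4 ((hNs q.1 h1).2 q.2 h2 hmem (Ne.symm h3))
      rw [Finset.mem_product]
      exact ⟨Finset.mem_singleton_self _, hmem⟩
    have hDcard : D.card ≤ (n.choose 2) * d := by
      refine (Finset.card_le_card hDsub).trans (Finset.card_biUnion_le.trans ?_)
      have hEcard : (Finset.univ.filter (fun e : Sym2 (Fin n) => ¬e.IsDiag)).card
          = n.choose 2 := by
        rw [← Fintype.card_subtype, Sym2.card_subtype_not_diag, Fintype.card_fin]
      calc ∑ e ∈ Finset.univ.filter (fun e : Sym2 (Fin n) => ¬e.IsDiag), ({e} ×ˢ Ns e).card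
          ≤ ∑ e ∈ Finset.univ.filter (fun e : Sym2 (Fin n) => ¬e.IsDiag), d :=
            Finset.sum_le_sum (fun e he => by
              rw [Finset.card_product, Finset.card_singleton, one_mul]
              exact ((hNs e (by simpa using he)).1))
        _ = (n.choose 2) * d := by rw [Finset.sum_const, smul_eq_mul, hEcard]
    -- arithmetic
    obtain ⟨b, rfl⟩ : ∃ b, k = b + 3 := ⟨k - 3, by omega⟩
    have h27 : 27 ≤ n := by
      calc 27 = 1 * 3 ^ 3 := by norm_num
        _ ≤ d * (b + 3) ^ 3 := Nat.mul_le_mul hd (Nat.pow_le_pow_left (by omega) 3)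
        _ ≤ n := hdk
    obtain ⟨a, rfl⟩ : ∃ a, n = a + 3 := ⟨n - 3, by omega⟩
    have hE : 2 * ((a + 3).choose 2) ≤ (a + 3) * (a + 3) := by
      rw [Nat.choose_two_right]
      have h1 : 2 * ((a + 3) * (a + 3 - 1) / 2) ≤ (a + 3) * (a + 3 - 1) := by omega
      exact h1.trans (Nat.mul_le_mul le_rfl (by omega))
    have hnat : 2 * (a + 3) * Bad.card ≤
        3 * d * (b + 3) ^ 3 * Nat.choose (a + 3) (b + 3) := by
      refine nat_key a b d ((a + 3).choose 2) Bad.card (by omega) hE ?_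
      have : (a + 3 - 3).choose (b + 3 - 3) = a.choose b := by norm_num
      calc Bad.card ≤ D.card * ((a + 3 - 3).choose (b + 3 - 3)) := hBadcard
        _ ≤ ((a + 3).choose 2 * d) * ((a + 3 - 3).choose (b + 3 - 3)) :=
            Nat.mul_le_mul hDcard le_rfl
        _ = (a + 3).choose 2 * d * a.choose b := by rw [this]
    -- real conversion
    have hnR : (0:ℝ) < ((a + 3 : ℕ) : ℝ) := by positivity
    have hGoodR : (Good.card : ℝ) = ((a + 3).choose (b + 3) : ℝ) - Bad.card := by
      rw [← hsum]; push_cast; ring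
    have hBadR : (Bad.card : ℝ) ≤ 3 * (d : ℝ) * ((b + 3 : ℕ) : ℝ) ^ 3 /
        (2 * ((a + 3 : ℕ) : ℝ)) * ((a + 3).choose (b + 3) : ℝ) := by
      rw [div_mul_eq_mul_div, le_div_iff₀ (by positivity)]
      calc (Bad.card : ℝ) * (2 * ((a + 3 : ℕ) : ℝ))
          = ((2 * (a + 3) * Bad.card : ℕ) : ℝ) := by push_cast; ring
        _ ≤ ((3 * d * (b + 3) ^ 3 * Nat.choose (a + 3) (b + 3) : ℕ) : ℝ) :=
            Nat.cast_le.2 hnat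
        _ = 3 * (d : ℝ) * ((b + 3 : ℕ) : ℝ) ^ 3 * ((a + 3).choose (b + 3) : ℝ) := by
            push_cast; ring
    have hring : (1 - 3 * (d : ℝ) * ((b + 3 : ℕ) : ℝ) ^ 3 / (2 * ((a + 3 : ℕ) : ℝ))) *
        ((a + 3).choose (b + 3) : ℝ) = ((a + 3).choose (b + 3) : ℝ) -
        3 * (d : ℝ) * ((b + 3 : ℕ) : ℝ) ^ 3 / (2 * ((a + 3 : ℕ) : ℝ)) *
        ((a + 3).choose (b + 3) : ℝ) := by ring
    rw [hring, hGoodR]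
    linarith
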